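/- Let R be an integral domain with quotient field K and A an integral domain containing R with a retraction Φ : A → R whose kernel is finitely generated. If A ⊗_R K is a polynomial ring in one variable over K, then there exist t ∈ R, t ≠ 0, and F ∈ Ker Φ such that A[1/t] = R[1/t][F], a polynomial ring in one variable over R[1/t]. -/

import Mathlib

open Polynomial

/-- Let `R` be an integral domain with quotient field `K` and `A`
an integral domain containing `R` with a retraction `Φ : A → R` whose kernel is
finitely generated. If `A ⊗_R K = K^{[1]}` (encoded: there is `x₀ ∈ A`
transcendental over `R` such that every `a ∈ A` satisfies `r·a ∈ R[x₀]` for some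
nonzero `r ∈ R`), then there exist a nonzero `t ∈ R` and `F ∈ Ker Φ` such that
`A[1/t] = R[1/t][F]` is a polynomial ring in one variable over `R[1/t]`. -/
theorem stmt10 {A : Type*} [CommRing A] [IsDomain A] (R : Subring A)
    (Φ : A →+* R) (hΦ : ∀ r : R, Φ (r : A) = r)
    (hfg : (RingHom.ker Φ).FG)
    (hK : ∃ x₀ : A, Transcendental R x₀ ∧
      ∀ a : A, ∃ r : R, r ≠ 0 ∧ (r : A) * a ∈ Algebra.adjoin R {x₀}) :
    ∃ t : R, t ≠ 0 ∧ ∃ F : A, Φ F = 0 ∧ Transcendental R F ∧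
      ∀ a : A, ∃ n : ℕ, (t : A) ^ n * a ∈ Algebra.adjoin R {F} := by
  classical
  obtain ⟨x₀, hx₀, hloc⟩ := hK
  set F : A := x₀ - (Φ x₀ : A) with hF
  have hΦF : Φ F = 0 := by simp [hF, map_sub, hΦ]
  have hFtrans : Transcendental R F := by
    have := hx₀.aeval (X - C (Φ x₀)) (by simp)
      (by simpa using one_mem (nonZeroDivisors ↥R))
    simpa [hF, show (algebraMap R A) (Φ x₀) = ((Φ x₀ : R) : A) from rfl] using this
  have hinj : Function.Injective (aeval F : R[X] →ₐ[R] A) :=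
    transcendental_iff_injective.mp hFtrans
  have hadj : Algebra.adjoin R {x₀} = Algebra.adjoin R {F} := by
    apply le_antisymm
    · apply Algebra.adjoin_le
      apply Set.singleton_subset_iff.mpr
      have h1 : F ∈ Algebra.adjoin R {F} := Algebra.self_mem_adjoin_singleton R F
      have h2 := add_mem h1 (Subalgebra.algebraMap_mem (Algebra.adjoin R {F}) (Φ x₀))
      simpa [hF, sub_add_cancel,
        show (algebraMap R A) (Φ x₀) = ((Φ x₀ : R) : A) from rfl] using h2
    · apply Algebra.adjoin_le
      apply Set.singleton_subset_iff.mpr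
      exact sub_mem (Algebra.self_mem_adjoin_singleton R x₀)
        (Subalgebra.algebraMap_mem _ (Φ x₀))
  have hrep : ∀ a : A, ∃ r : R, r ≠ 0 ∧ ∃ p : R[X], (r : A) * a = aeval F p := by
    intro a
    obtain ⟨r, hr, hmem⟩ := hloc a
    rw [hadj, Algebra.adjoin_singleton_eq_range_aeval] at hmem
    obtain ⟨p, hp⟩ := hmem
    exact ⟨r, hr, p, hp.symm⟩
  have hΦaeval : ∀ p : R[X], Φ (aeval F p) = p.coeff 0 := by
    intro p
    have hcomm : ∀ r : R, Φ (algebraMap R A r) = algebraMap R R r := fun r => by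
      simpa [show (algebraMap R A) r = (r : A) from rfl] using hΦ r
    let Φ' : A →ₐ[R] R := { Φ with commutes' := hcomm }
    have h1 : Φ (aeval F p) = aeval (Φ' F) p := (aeval_algHom_apply Φ' F p).symm
    have h2 : Φ' F = 0 := hΦF
    rw [h1, h2]
    simp [aeval_def, eval₂_at_zero]
  -- global choice of denominators
  choose s hs0 g hsg using hrep
  obtain ⟨S, hS⟩ := hfg
  set t : R := ∏ f ∈ S, s f with ht_def
  have ht : t ≠ 0 := Finset.prod_ne_zero_iff.mpr fun f _ => hs0 f
  have hg0 : ∀ f ∈ S, (g f).coeff 0 = 0 := by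
    intro f hfS
    have hfker : Φ f = 0 := by
      have : f ∈ RingHom.ker Φ := by
        rw [← hS]; exact Ideal.subset_span hfS
      simpa [RingHom.mem_ker] using this
    have := congrArg Φ (hsg f)
    rw [map_mul, hΦ (s f), hfker, mul_zero, hΦaeval] at this
    exact this.symm
  -- key divisibility lemma
  have key : ∀ m : ℕ, ∀ a : A, ∀ r : R, r ≠ 0 → ∀ p : R[X], (r : A) * a = aeval F p →
      r ∣ t ^ m * p.coeff m := by
    intro m
    induction m using Nat.strong_induction_on with
    | _ m IH =>
      intro a r hr p hp
      rcases Nat.eq_zero_or_pos m with rfl | hm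
      · have h0 := congrArg Φ hp
        rw [map_mul, hΦ r, hΦaeval] at h0
        exact ⟨Φ a, by simpa using h0.symm⟩
      · obtain ⟨k, rfl⟩ : ∃ k, m = k + 1 := ⟨m - 1, (Nat.succ_pred_eq_of_pos hm).symm⟩
        -- write a - Φ a as combination of generators
        have hbker : a - (Φ a : A) ∈ RingHom.ker Φ := by
          simp [RingHom.mem_ker, map_sub, hΦ]
        rw [← hS] at hbker
        obtain ⟨b, -, hb⟩ := Submodule.mem_span_finset.mp hbker
        set r' : R := ∏ f ∈ S, s (b f) with hr'_def
        have hr'0 : r' ≠ 0 := Finset.prod_ne_zero_iff.mpr fun f _ => hs0 (b f)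
        set Q : R[X] := ∑ f ∈ S, C (∏ j ∈ S.erase f, (s (b j) * s j)) * (g (b f) * g f)
          with hQ_def
        have hfactor : ∀ f ∈ S, r' * t = (s (b f) * s f) * ∏ j ∈ S.erase f, (s (b j) * s j) := by
          intro f hfS
          rw [hr'_def, ht_def, ← Finset.prod_mul_distrib,
            ← Finset.mul_prod_erase _ _ hfS]
        have hid : ((r' * t : R) : A) * (a - (Φ a : A)) = aeval F Q := by
          rw [← hb, Finset.mul_sum, hQ_def, map_sum]
          apply Finset.sum_congr rfl
          intro f hfS
          rw [hfactor f hfS]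
          have e1 : (((s (b f) * s f) * ∏ j ∈ S.erase f, (s (b j) * s j) : R) : A)
              * (b f • f)
              = ((∏ j ∈ S.erase f, (s (b j) * s j) : R) : A)
                * (((s (b f) : A) * b f) * ((s f : A) * f)) := by
            push_cast
            simp only [smul_eq_mul]
            ring
          rw [e1, hsg (b f), hsg f]
          rw [map_mul, map_mul, aeval_C]
          simp only [show ∀ x : R, (algebraMap R A) x = (x : A) from fun _ => rfl]
          try ring
        -- polynomial identity
        have hpoly : C (r' * t) * (p - C (r * Φ a)) = C r * Q := by
          apply hinj
          have lhs : aeval F (C (r' * t) * (p - C (r * Φ a)))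
              = ((r' * t : R) : A) * ((r : A) * a - ((r * Φ a : R) : A)) := by
            rw [map_mul, map_sub, aeval_C, aeval_C, hp]
            rfl
          have rhs : aeval F (C r * Q) = (r : A) * aeval F Q := by
            rw [map_mul, aeval_C]; rfl
          rw [lhs, rhs, ← hid]
          push_cast
          ring
        have hcoeff : (r' * t) * p.coeff (k + 1) = r * Q.coeff (k + 1) := by
          have := congrArg (fun q => q.coeff (k + 1)) hpoly
          simp only [coeff_C_mul, coeff_sub, coeff_C, if_neg (Nat.succ_ne_zero k),
            sub_zero] at this
          exact this
        -- divisibility of Q coefficient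
        have hdvd : r' ∣ t ^ k * Q.coeff (k + 1) := by
          rw [hQ_def, finset_sum_coeff, Finset.mul_sum]
          apply Finset.dvd_sum
          intro f hfS
          rw [coeff_C_mul, coeff_mul, Finset.mul_sum, Finset.mul_sum]
          apply Finset.dvd_sum
          rintro ⟨u, v⟩ huv
          rw [Finset.HasAntidiagonal.mem_antidiagonal] at huv
          rcases Nat.eq_zero_or_pos v with rfl | hv
          · rw [hg0 f hfS]
            simp
          · have hu : u < k + 1 := by omega
            have hdvd1 : s (b f) ∣ t ^ u * (g (b f)).coeff u :=
              IH u hu (b f) (s (b f)) (hs0 (b f)) (g (b f)) (hsg (b f))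
            have hdvd2 : (∏ j ∈ S.erase f, s (b j)) ∣ ∏ j ∈ S.erase f, (s (b j) * s j) :=
              Finset.prod_dvd_prod_of_dvd _ _ fun j _ => dvd_mul_right _ _
            have hr'eq : r' = s (b f) * ∏ j ∈ S.erase f, s (b j) := by
              rw [hr'_def, ← Finset.mul_prod_erase _ _ hfS]
            obtain ⟨w1, hw1⟩ := hdvd1
            obtain ⟨w2, hw2⟩ := hdvd2
            obtain ⟨l, rfl⟩ : ∃ l, k = u + l := ⟨k - u, by omega⟩
            refine ⟨w1 * w2 * t ^ l * (g f).coeff v, ?_⟩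
            calc t ^ (u + l) * ((∏ j ∈ S.erase f, (s (b j) * s j))
                  * ((g (b f)).coeff u * (g f).coeff v))
                = (t ^ u * (g (b f)).coeff u) * (∏ j ∈ S.erase f, (s (b j) * s j))
                  * (t ^ l * (g f).coeff v) := by
                  rw [pow_add]; ring
              _ = (s (b f) * w1) * ((∏ j ∈ S.erase f, s (b j)) * w2)
                  * (t ^ l * (g f).coeff v) := by rw [hw1, hw2]
              _ = r' * (w1 * w2 * t ^ l * (g f).coeff v) := by
                  rw [hr'eq]; ring
        obtain ⟨w, hw⟩ := hdvd
        refine ⟨w, mul_left_cancel₀ hr'0 ?_⟩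
        calc r' * (t ^ (k + 1) * p.coeff (k + 1))
            = ((r' * t) * p.coeff (k + 1)) * t ^ k := by ring
          _ = (r * Q.coeff (k + 1)) * t ^ k := by rw [hcoeff]
          _ = r * (t ^ k * Q.coeff (k + 1)) := by ring
          _ = r * (r' * w) := by rw [hw]
          _ = r' * (r * w) := by ring
  -- conclusion
  refine ⟨t, ht, F, hΦF, hFtrans, ?_⟩
  intro a
  obtain ⟨r, hr, p, hp⟩ : ∃ r : R, r ≠ 0 ∧ ∃ p : R[X], (r : A) * a = aeval F p :=
    ⟨s a, hs0 a, g a, hsg a⟩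
  refine ⟨p.natDegree, ?_⟩
  have hall : ∀ m : ℕ, r ∣ t ^ p.natDegree * p.coeff m := by
    intro m
    rcases le_or_gt m p.natDegree with hle | hlt
    · obtain ⟨w, hw⟩ := key m a r hr p hp
      obtain ⟨l, hl⟩ : ∃ l, p.natDegree = l + m := ⟨p.natDegree - m, by omega⟩
      refine ⟨t ^ l * w, ?_⟩
      rw [hl, pow_add, mul_assoc, hw]
      ring
    · rw [p.coeff_eq_zero_of_natDegree_lt hlt, mul_zero]
      exact dvd_zero r
  choose u hu using hall
  set p' : R[X] := ∑ m ∈ Finset.range (p.natDegree + 1), C (u m) * X ^ m with hp'_def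
  have hCp' : C r * p' = C (t ^ p.natDegree) * p := by
    ext m
    rw [coeff_C_mul, coeff_C_mul]
    rcases le_or_gt m p.natDegree with hle | hlt
    · have : p'.coeff m = u m := by
        rw [hp'_def, finset_sum_coeff]
        rw [Finset.sum_eq_single m]
        · simp
        · intro j _ hj
          simp [coeff_C_mul, coeff_X_pow, Ne.symm hj]
        · intro hm
          exact absurd (Finset.mem_range.mpr (by omega)) hm
      rw [this, ← hu m]
    · have h1 : p'.coeff m = 0 := by
        rw [hp'_def, finset_sum_coeff]
        apply Finset.sum_eq_zero
        intro j hj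
        rw [Finset.mem_range] at hj
        have hmj : ¬ m = j := by omega
        rw [coeff_C_mul, coeff_X_pow, if_neg hmj, mul_zero]
      rw [h1, p.coeff_eq_zero_of_natDegree_lt hlt]
      simp
  have hmain : (r : A) * aeval F p' = (r : A) * ((t : A) ^ p.natDegree * a) := by
    have := congrArg (aeval F) hCp'
    rw [map_mul, map_mul, aeval_C, aeval_C] at this
    have e : (algebraMap R A) r = (r : A) := rfl
    have e2 : (algebraMap R A) (t ^ p.natDegree) = (t : A) ^ p.natDegree := by push_cast; rfl
    rw [e, e2, ← hp] at this
    rw [this]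
    ring
  have hr' : (r : A) ≠ 0 := by
    intro h
    apply hr
    exact Subtype.ext (by simpa using h)
  have := mul_left_cancel₀ hr' hmain
  rw [← this, Algebra.adjoin_singleton_eq_range_aeval]
  exact ⟨p', rfl⟩
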